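/- In an aggregative binary-action game with thresholds c_1 ≤ c_2 ≤ ... ≤ c_n (each c_i between 1 and n−1), where player i strictly prefers action 1 if and only if the number of other players taking action 1 is at least c_i, an action profile a is a pure Nash equilibrium if and only if the set of players taking action 1 equals {1,...,k} for some k ∈ {0,...,n} with: k=0, or (c_k ≤ k−1 and (k=n or c_{k+1} > k)). -/
import Mathlib

private lemma stmt6_erase (n : ℕ) (a : Fin n → Bool) (i : Fin n) :
    (Finset.univ.filter (fun j => j ≠ i ∧ a j = true))
      = (Finset.univ.filter (fun j => a j = true)).erase i := by
  ext j; simp [Finset.mem_erase, and_comm]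

private lemma stmt6_card (n k : ℕ) (hkn : k ≤ n) :
    (Finset.univ.filter (fun j : Fin n => (j : ℕ) < k)).card = k := by
  have : Finset.univ.filter (fun j : Fin n => (j : ℕ) < k)
      = Finset.univ.image (Fin.castLE hkn) := by
    ext i
    simp only [Finset.mem_filter, Finset.mem_univ, true_and, Finset.mem_image]
    constructor
    · intro h; exact ⟨⟨i, h⟩, rfl⟩
    · rintro ⟨j, rfl⟩; exact j.isLt
  rw [this, Finset.card_image_of_injective _ (Fin.castLE_injective hkn)]
  simp

/-- In an aggregative binary-action game with nondecreasing thresholds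
`c 0 ≤ … ≤ c (n-1)` (each between `1` and `n-1`), a profile is a pure Nash
equilibrium iff the set of players playing `1` is an initial segment
`{0, …, k-1}` with `k = 0`, or `c (k-1) ≤ k-1` and (`k = n` or `c k > k`). -/
theorem stmt6 (n : ℕ) (c : Fin n → ℕ) (hmono : Monotone c)
    (hc : ∀ i, 1 ≤ c i ∧ c i ≤ n - 1) (a : Fin n → Bool) :
    (∀ i, a i = true ↔
        c i ≤ (Finset.univ.filter (fun j => j ≠ i ∧ a j = true)).card) ↔
      ∃ k : ℕ, k ≤ n ∧ (∀ i : Fin n, a i = true ↔ (i : ℕ) < k) ∧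
        (k = 0 ∨ ∃ h1 : k - 1 < n, c ⟨k - 1, h1⟩ ≤ k - 1 ∧
          (k = n ∨ ∃ h2 : k < n, k < c ⟨k, h2⟩)) := by
  set S := Finset.univ.filter (fun j => a j = true) with hS
  constructor
  · intro hN
    set k := S.card with hk
    have hkn : k ≤ n := by
      calc k ≤ Finset.univ.card := Finset.card_le_card (Finset.filter_subset _ _)
        _ = n := by simp
    have hmemS : ∀ i : Fin n, i ∈ S ↔ a i = true := by
      intro i; simp [hS]
    have hcardT : ∀ i : Fin n, a i = true →
        (Finset.univ.filter (fun j => j ≠ i ∧ a j = true)).card = k - 1 := by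
      intro i hi
      rw [stmt6_erase, Finset.card_erase_of_mem ((hmemS i).2 hi)]
    have hcardF : ∀ i : Fin n, a i = false →
        (Finset.univ.filter (fun j => j ≠ i ∧ a j = true)).card = k := by
      intro i hi
      rw [stmt6_erase, Finset.erase_eq_of_notMem]
      intro h
      rw [(hmemS i).1 h] at hi; simp at hi
    -- downward closed
    have hdc : ∀ i j : Fin n, j ≤ i → a i = true → a j = true := by
      intro i j hji hi
      by_contra hj
      have hj' : a j = false := by simpa using hj
      have h1 : c i ≤ k - 1 := by
        have := (hN i).1 hi
        rwa [hcardT i hi] at this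
      have h2 : ¬ c j ≤ k := by
        intro h
        have := (hN j).2 (by rwa [hcardF j hj'])
        rw [hj'] at this; simp at this
      exact h2 (le_trans (hmono hji) (le_trans h1 (Nat.sub_le _ _)))
    -- initial segment
    have hseg : ∀ i : Fin n, a i = true ↔ (i : ℕ) < k := by
      intro i
      constructor
      · intro hi
        by_contra hik
        push_neg at hik
        have hsub : Finset.univ.filter (fun j : Fin n => (j : ℕ) < k) ⊆ S := by
          intro j hj
          simp only [Finset.mem_filter, Finset.mem_univ, true_and] at hj
          exact (hmemS j).2 (hdc i j (by omega) hi)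
        have := Finset.card_le_card hsub
        rw [stmt6_card n k hkn] at this
        have hi' : i ∈ S := (hmemS i).2 hi
        have : Finset.univ.filter (fun j : Fin n => (j : ℕ) < k) ⊆ S.erase i := by
          intro j hj
          simp only [Finset.mem_filter, Finset.mem_univ, true_and] at hj
          refine Finset.mem_erase.2 ⟨?_, hsub (by simp [hj])⟩
          intro h; rw [h] at hj; omega
        have := Finset.card_le_card this
        rw [stmt6_card n k hkn, Finset.card_erase_of_mem hi'] at this
        have hk1 : 1 ≤ k := Finset.card_pos.2 ⟨i, hi'⟩
        omega
      · intro hik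
        by_contra hi
        have hi' : a i = false := by simpa using hi
        have hsub : S ⊆ Finset.univ.filter (fun j : Fin n => (j : ℕ) < (i : ℕ)) := by
          intro j hj
          simp only [Finset.mem_filter, Finset.mem_univ, true_and]
          by_contra h
          push_neg at h
          have := hdc j i (by omega) ((hmemS j).1 hj)
          rw [hi'] at this; simp at this
        have := Finset.card_le_card hsub
        rw [stmt6_card n i i.isLt.le] at this
        omega
    refine ⟨k, hkn, hseg, ?_⟩
    rcases Nat.eq_zero_or_pos k with hk0 | hk0
    · exact Or.inl hk0
    · right
      have h1 : k - 1 < n := by omega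
      refine ⟨h1, ?_, ?_⟩
      · have ha : a ⟨k - 1, h1⟩ = true := (hseg _).2 (by simp; omega)
        have := (hN _).1 ha
        rwa [hcardT _ ha] at this
      · rcases Nat.eq_or_lt_of_le hkn with hkeq | hklt
        · exact Or.inl hkeq
        · right
          refine ⟨hklt, ?_⟩
          have ha : a ⟨k, hklt⟩ = false := by
            have := (hseg ⟨k, hklt⟩).not
            simp only [Fin.val_mk, lt_self_iff_false, iff_false] at this
            simpa using this
          by_contra h
          push_neg at h
          have := (hN ⟨k, hklt⟩).2 (by rwa [hcardF _ ha])
          rw [ha] at this; simp at this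
  · rintro ⟨k, hkn, hseg, hcond⟩
    have hSeq : S = Finset.univ.filter (fun j : Fin n => (j : ℕ) < k) := by
      ext j; simp [hS, hseg j]
    have hScard : S.card = k := by rw [hSeq]; exact stmt6_card n k hkn
    intro i
    rw [stmt6_erase]
    by_cases hi : a i = true
    · rw [Finset.card_erase_of_mem (by simp [hS, hi]), hScard]
      simp only [hi, true_iff]
      have hik : (i : ℕ) < k := (hseg i).1 hi
      rcases hcond with hk0 | ⟨h1, hck, _⟩
      · omega
      · exact le_trans (hmono (by simp only [Fin.le_def, Fin.val_mk]; omega)) hck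
    · have hi' : a i = false := by simpa using hi
      rw [Finset.erase_eq_of_notMem (by simp [hS, hi']), hScard]
      simp only [hi', Bool.false_eq_true, false_iff, not_le]
      have hik : ¬ (i : ℕ) < k := fun h => hi ((hseg i).2 h)
      rcases hcond with hk0 | ⟨h1, hck, hcond2⟩
      · rw [hk0]; exact (hc i).1
      · rcases hcond2 with hkeq | ⟨h2, hck2⟩
        · exact absurd i.isLt (by omega)
        · refine lt_of_lt_of_le hck2 (hmono ?_)
          simp only [Fin.le_def, Fin.val_mk]; omega
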